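/- Operational Friendliness no-go theorem (mathematical core): there is no family of probability distributions p(·|x,y) on {0,1}^4 with coordinates (a,b,c,d), indexed by (x,y) ∈ {0,1}×{0,1}, satisfying all of: (i) the (c,d)-marginal of p(·|x,y) does not depend on y; (ii) the c-marginal of p(·|x,y) does not depend on (x,y); (iii) for every y and every value of c having positive c-marginal probability, the conditional distribution of d given c under p(·|x,y) does not depend on x; (iv) for every y and every value of c having positive c-marginal probability, the conditional distribution of b given c under p(·|x,y) does not depend on x; (v) the (a,d)-marginal of p(·|x,y) does not depend on y; together with the empirical correlator values E_{p(·|0,0)}(c,d) = −1/√2, E_{p(·|0,1)}(c,b) = 1/√2, E_{p(·|1,0)}(a,d) = 1/√2, and E_{p(·|1,1)}(a,b) = 1/√2. -/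

import Mathlib

/-- The sign `(-1)^u` associated to an outcome `u ∈ {0,1}`. -/
noncomputable def sgn (u : Fin 2) : ℝ := (-1 : ℝ) ^ (u : ℕ)

/-- Correlator of the coordinates `a` and `b` of a distribution `q` on `{0,1}^4`
with coordinates `(a, b, c, d)`. -/
noncomputable def Eab (q : Fin 2 → Fin 2 → Fin 2 → Fin 2 → ℝ) : ℝ :=
  ∑ a : Fin 2, ∑ b : Fin 2, ∑ c : Fin 2, ∑ d : Fin 2, q a b c d * sgn a * sgn b

/-- Correlator of the coordinates `a` and `d`. -/
noncomputable def Ead (q : Fin 2 → Fin 2 → Fin 2 → Fin 2 → ℝ) : ℝ :=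
  ∑ a : Fin 2, ∑ b : Fin 2, ∑ c : Fin 2, ∑ d : Fin 2, q a b c d * sgn a * sgn d

/-- Correlator of the coordinates `c` and `b`. -/
noncomputable def Ecb (q : Fin 2 → Fin 2 → Fin 2 → Fin 2 → ℝ) : ℝ :=
  ∑ a : Fin 2, ∑ b : Fin 2, ∑ c : Fin 2, ∑ d : Fin 2, q a b c d * sgn c * sgn b

/-- Correlator of the coordinates `c` and `d`. -/
noncomputable def Ecd (q : Fin 2 → Fin 2 → Fin 2 → Fin 2 → ℝ) : ℝ :=
  ∑ a : Fin 2, ∑ b : Fin 2, ∑ c : Fin 2, ∑ d : Fin 2, q a b c d * sgn c * sgn d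

/-- The `(c,d)`-marginal. -/
noncomputable def margCD (q : Fin 2 → Fin 2 → Fin 2 → Fin 2 → ℝ) (c d : Fin 2) : ℝ :=
  ∑ a : Fin 2, ∑ b : Fin 2, q a b c d

/-- The `c`-marginal. -/
noncomputable def margC (q : Fin 2 → Fin 2 → Fin 2 → Fin 2 → ℝ) (c : Fin 2) : ℝ :=
  ∑ a : Fin 2, ∑ b : Fin 2, ∑ d : Fin 2, q a b c d

/-- The `(c,b)`-marginal. -/
noncomputable def margCB (q : Fin 2 → Fin 2 → Fin 2 → Fin 2 → ℝ) (c b : Fin 2) : ℝ :=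
  ∑ a : Fin 2, ∑ d : Fin 2, q a b c d

/-- The `(a,d)`-marginal. -/
noncomputable def margAD (q : Fin 2 → Fin 2 → Fin 2 → Fin 2 → ℝ) (a d : Fin 2) : ℝ :=
  ∑ b : Fin 2, ∑ c : Fin 2, q a b c d


lemma margC_eq_sum_margCD (q : Fin 2 → Fin 2 → Fin 2 → Fin 2 → ℝ) (c : Fin 2) :
    margC q c = margCD q c 0 + margCD q c 1 := by
  simp [margC, margCD, Fin.sum_univ_two]; ring

lemma margC_eq_sum_margCB (q : Fin 2 → Fin 2 → Fin 2 → Fin 2 → ℝ) (c : Fin 2) :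
    margC q c = margCB q c 0 + margCB q c 1 := by
  simp [margC, margCB, Fin.sum_univ_two]; ring

lemma margCD_nonneg (q : Fin 2 → Fin 2 → Fin 2 → Fin 2 → ℝ)
    (hq : ∀ a b c d, 0 ≤ q a b c d) (c d : Fin 2) : 0 ≤ margCD q c d :=
  Finset.sum_nonneg fun a _ => Finset.sum_nonneg fun b _ => hq a b c d

lemma margCB_nonneg (q : Fin 2 → Fin 2 → Fin 2 → Fin 2 → ℝ)
    (hq : ∀ a b c d, 0 ≤ q a b c d) (c b : Fin 2) : 0 ≤ margCB q c b :=
  Finset.sum_nonneg fun a _ => Finset.sum_nonneg fun d _ => hq a b c d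

lemma Ecd_marg (q : Fin 2 → Fin 2 → Fin 2 → Fin 2 → ℝ) :
    Ecd q = ∑ c : Fin 2, ∑ d : Fin 2, margCD q c d * sgn c * sgn d := by
  simp [Ecd, margCD, Fin.sum_univ_two]; ring

lemma Ecb_marg (q : Fin 2 → Fin 2 → Fin 2 → Fin 2 → ℝ) :
    Ecb q = ∑ c : Fin 2, ∑ b : Fin 2, margCB q c b * sgn c * sgn b := by
  simp [Ecb, margCB, Fin.sum_univ_two]; ring

lemma Ead_marg (q : Fin 2 → Fin 2 → Fin 2 → Fin 2 → ℝ) :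
    Ead q = ∑ a : Fin 2, ∑ d : Fin 2, margAD q a d * sgn a * sgn d := by
  simp [Ead, margAD, Fin.sum_univ_two]; ring

lemma chsh (q : Fin 2 → Fin 2 → Fin 2 → Fin 2 → ℝ)
    (hq : ∀ a b c d, 0 ≤ q a b c d)
    (hsum : ∑ a : Fin 2, ∑ b : Fin 2, ∑ c : Fin 2, ∑ d : Fin 2, q a b c d = 1) :
    Eab q + Ead q + Ecb q - Ecd q ≤ 2 := by
  have h := fun a b c d => hq a b c d
  simp only [Eab, Ead, Ecb, Ecd, Fin.sum_univ_two, sgn] at *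
  norm_num at hsum ⊢
  nlinarith [h 0 0 0 0, h 0 0 0 1, h 0 0 1 0, h 0 0 1 1,
    h 0 1 0 0, h 0 1 0 1, h 0 1 1 0, h 0 1 1 1,
    h 1 0 0 0, h 1 0 0 1, h 1 0 1 0, h 1 0 1 1,
    h 1 1 0 0, h 1 1 0 1, h 1 1 1 0, h 1 1 1 1]

/-- Operational Friendliness no-go theorem (mathematical core): no family of
distributions `p(·|x,y)` on `{0,1}^4` can satisfy the Operational Agency
conditions (i)–(v) together with the quantum correlator values of the
Operational Friendliness protocol. -/
theorem operational_friendliness_no_go :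
    ¬ ∃ p : Fin 2 → Fin 2 → Fin 2 → Fin 2 → Fin 2 → Fin 2 → ℝ,  -- `p x y a b c d`
        (∀ x y a b c d, 0 ≤ p x y a b c d) ∧
        (∀ x y, ∑ a : Fin 2, ∑ b : Fin 2, ∑ c : Fin 2, ∑ d : Fin 2, p x y a b c d = 1) ∧
        -- (i) the (c,d)-marginal does not depend on y
        (∀ x y y' c d, margCD (p x y) c d = margCD (p x y') c d) ∧
        -- (ii) the c-marginal does not depend on (x,y)
        (∀ x y x' y' c, margC (p x y) c = margC (p x' y') c) ∧
        -- (iii) the conditional distribution of d given c does not depend on x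
        (∀ x x' y c, 0 < margC (p x y) c →
          ∀ d, margCD (p x y) c d / margC (p x y) c
              = margCD (p x' y) c d / margC (p x' y) c) ∧
        -- (iv) the conditional distribution of b given c does not depend on x
        (∀ x x' y c, 0 < margC (p x y) c →
          ∀ b, margCB (p x y) c b / margC (p x y) c
              = margCB (p x' y) c b / margC (p x' y) c) ∧
        -- (v) the (a,d)-marginal does not depend on y
        (∀ x y y' a d, margAD (p x y) a d = margAD (p x y') a d) ∧
        -- empirical quantum correlators
        Ecd (p 0 0) = -(1 / Real.sqrt 2) ∧
        Ecb (p 0 1) = 1 / Real.sqrt 2 ∧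
        Ead (p 1 0) = 1 / Real.sqrt 2 ∧
        Eab (p 1 1) = 1 / Real.sqrt 2 := by
  rintro ⟨p, hpos, hsum, hi, hii, hiii, hiv, hv, hcd, hcb, had, hab⟩
  -- margCD is the same across all settings
  have hCDx : ∀ x x' y c d, margCD (p x y) c d = margCD (p x' y) c d := by
    intro x x' y c d
    by_cases hm : 0 < margC (p x y) c
    · have h3 := hiii x x' y c hm d
      have hmc : margC (p x y) c = margC (p x' y) c := hii x y x' y c
      rw [hmc] at h3 hm
      rw [div_eq_div_iff (ne_of_gt hm) (ne_of_gt hm)] at h3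
      exact mul_right_cancel₀ (ne_of_gt hm) h3
    · have h0 : margC (p x y) c = 0 := by
        refine le_antisymm (not_lt.mp hm) ?_
        rw [margC_eq_sum_margCD]
        have := margCD_nonneg (p x y) (hpos x y) c 0
        have := margCD_nonneg (p x y) (hpos x y) c 1
        linarith
      have h0' : margC (p x' y) c = 0 := by rw [← hii x y x' y c]; exact h0
      have e1 : margCD (p x y) c 0 + margCD (p x y) c 1 = 0 := by
        rw [← margC_eq_sum_margCD]; exact h0
      have e2 : margCD (p x' y) c 0 + margCD (p x' y) c 1 = 0 := by
        rw [← margC_eq_sum_margCD]; exact h0'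
      have n1 := margCD_nonneg (p x y) (hpos x y) c 0
      have n2 := margCD_nonneg (p x y) (hpos x y) c 1
      have n3 := margCD_nonneg (p x' y) (hpos x' y) c 0
      have n4 := margCD_nonneg (p x' y) (hpos x' y) c 1
      obtain rfl | rfl : d = 0 ∨ d = 1 := by omega
      · linarith
      · linarith
  have hCBx : ∀ x x' y c b, margCB (p x y) c b = margCB (p x' y) c b := by
    intro x x' y c b
    by_cases hm : 0 < margC (p x y) c
    · have h4 := hiv x x' y c hm b
      have hmc : margC (p x y) c = margC (p x' y) c := hii x y x' y c
      rw [hmc] at h4 hm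
      rw [div_eq_div_iff (ne_of_gt hm) (ne_of_gt hm)] at h4
      exact mul_right_cancel₀ (ne_of_gt hm) h4
    · have h0 : margC (p x y) c = 0 := by
        refine le_antisymm (not_lt.mp hm) ?_
        rw [margC_eq_sum_margCB]
        have := margCB_nonneg (p x y) (hpos x y) c 0
        have := margCB_nonneg (p x y) (hpos x y) c 1
        linarith
      have h0' : margC (p x' y) c = 0 := by rw [← hii x y x' y c]; exact h0
      have e1 : margCB (p x y) c 0 + margCB (p x y) c 1 = 0 := by
        rw [← margC_eq_sum_margCB]; exact h0
      have e2 : margCB (p x' y) c 0 + margCB (p x' y) c 1 = 0 := by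
        rw [← margC_eq_sum_margCB]; exact h0'
      have n1 := margCB_nonneg (p x y) (hpos x y) c 0
      have n2 := margCB_nonneg (p x y) (hpos x y) c 1
      have n3 := margCB_nonneg (p x' y) (hpos x' y) c 0
      have n4 := margCB_nonneg (p x' y) (hpos x' y) c 1
      obtain rfl | rfl : b = 0 ∨ b = 1 := by omega
      · linarith
      · linarith
  -- transfer correlators to p 1 1
  have eCD : Ecd (p 1 1) = Ecd (p 0 0) := by
    rw [Ecd_marg, Ecd_marg]
    refine Finset.sum_congr rfl fun c _ => Finset.sum_congr rfl fun d _ => ?_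
    rw [hi 1 1 0 c d, hCDx 1 0 0 c d]
  have eCB : Ecb (p 1 1) = Ecb (p 0 1) := by
    rw [Ecb_marg, Ecb_marg]
    refine Finset.sum_congr rfl fun c _ => Finset.sum_congr rfl fun b _ => ?_
    rw [hCBx 1 0 1 c b]
  have eAD : Ead (p 1 1) = Ead (p 1 0) := by
    rw [Ead_marg, Ead_marg]
    refine Finset.sum_congr rfl fun a _ => Finset.sum_congr rfl fun d _ => ?_
    rw [hv 1 1 0 a d]
  have hC := chsh (p 1 1) (hpos 1 1) (hsum 1 1)
  rw [hab, eAD, had, eCB, hcb, eCD, hcd] at hC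
  have hs2 : Real.sqrt 2 ^ 2 = 2 := Real.sq_sqrt (by norm_num)
  have hs0 : 0 < Real.sqrt 2 := Real.sqrt_pos.mpr (by norm_num)
  have h1 : Real.sqrt 2 * (1 / Real.sqrt 2) = 1 := by
    field_simp
  nlinarith [hC, hs2, hs0, h1, sq_nonneg (Real.sqrt 2 - 2)]
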